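/- The F_V Yang-Baxter map satisfies the set-theoretical Yang-Baxter equation: with R^{pq}(x,y) = (y + (p-q)/(x-y), x + (p-q)/(x-y)) acting on indicated factors of K³, one has R^{pq}₁₂ ∘ R^{pr}₁₃ ∘ R^{qr}₂₃ = R^{qr}₂₃ ∘ R^{pr}₁₃ ∘ R^{pq}₁₂ wherever all maps are defined. -/

import Mathlib

/-- The `F_V` map with parameters `(s,t)`. -/
noncomputable def FVmap {K : Type*} [Field K] (s t : K) (p : K × K) : K × K :=
  (p.2 + (s - t) / (p.1 - p.2), p.1 + (s - t) / (p.1 - p.2))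

/-- `F_V` acting on coordinates 1,2 of `K³`. -/
noncomputable def FV12 {K : Type*} [Field K] (s t : K) (p : K × K × K) : K × K × K :=
  ((FVmap s t (p.1, p.2.1)).1, (FVmap s t (p.1, p.2.1)).2, p.2.2)

/-- `F_V` acting on coordinates 1,3 of `K³`. -/
noncomputable def FV13 {K : Type*} [Field K] (s t : K) (p : K × K × K) : K × K × K :=
  ((FVmap s t (p.1, p.2.2)).1, p.2.1, (FVmap s t (p.1, p.2.2)).2)

/-- `F_V` acting on coordinates 2,3 of `K³`. -/
noncomputable def FV23 {K : Type*} [Field K] (s t : K) (p : K × K × K) : K × K × K :=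
  (p.1, (FVmap s t (p.2.1, p.2.2)).1, (FVmap s t (p.2.1, p.2.2)).2)

set_option maxHeartbeats 4000000 in
/-- The `F_V` map satisfies the set-theoretical Yang-Baxter equation
`R₁₂ ∘ R₁₃ ∘ R₂₃ = R₂₃ ∘ R₁₃ ∘ R₁₂` wherever defined. -/
theorem FV_yang_baxter {K : Type*} [Field K] [CharZero K] (p q r : K)
    (P : K × K × K)
    (h1 : P.2.1 - P.2.2 ≠ 0)
    (h2 : (FV23 q r P).1 - (FV23 q r P).2.2 ≠ 0)
    (h3 : (FV13 p r (FV23 q r P)).1 - (FV13 p r (FV23 q r P)).2.1 ≠ 0)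
    (h4 : P.1 - P.2.1 ≠ 0)
    (h5 : (FV12 p q P).1 - (FV12 p q P).2.2 ≠ 0)
    (h6 : (FV13 p r (FV12 p q P)).2.1 - (FV13 p r (FV12 p q P)).2.2 ≠ 0) :
    FV12 p q (FV13 p r (FV23 q r P)) = FV23 q r (FV13 p r (FV12 p q P)) := by
  obtain ⟨x, y, z⟩ := P
  simp only [FV12, FV13, FV23, FVmap] at *
  have e2 : x - (y + (q - r) / (y - z)) = ((x - y) * (y - z) - (q - r)) / (y - z) := by
    field_simp; ring
  have e5 : y + (p - q) / (x - y) - z = ((x - y) * (y - z) + (p - q)) / (x - y) := by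
    field_simp; ring
  have hA : (x - y) * (y - z) - (q - r) ≠ 0 := (div_ne_zero_iff.mp (e2 ▸ h2)).1
  have hB : (x - y) * (y - z) + (p - q) ≠ 0 := (div_ne_zero_iff.mp (e5 ▸ h5)).1
  have hA' : (y - z) * (x - y) - (q - r) ≠ 0 := by rwa [mul_comm]
  have hB' : (y - z) * (x - y) + (p - q) ≠ 0 := by rwa [mul_comm]
  have e3 : y + (q - r) / (y - z) + (p - r) / (x - (y + (q - r) / (y - z)))
      - (z + (q - r) / (y - z))
      = (y - z) * ((x - y) * (y - z) + (p - q)) / ((x - y) * (y - z) - (q - r)) := by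
    rw [e2, div_div_eq_mul_div]
    field_simp
    ring
  have e6 : x + (p - q) / (x - y)
      - (y + (p - q) / (x - y) + (p - r) / (y + (p - q) / (x - y) - z))
      = (x - y) * ((x - y) * (y - z) - (q - r)) / ((x - y) * (y - z) + (p - q)) := by
    rw [e5, div_div_eq_mul_div]
    field_simp
    ring
  refine Prod.ext ?_ (Prod.ext ?_ ?_) <;> simp only <;>
    simp only [e3, e6] <;> simp only [e2, e5, div_div_eq_mul_div] <;>
    (clear h2 h3 h5 h6 e2 e3 e5 e6) <;>
    field_simp <;> ring
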